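/- Let A be a real d' × d matrix with full column rank and let m ≤ d. Write F_S = {1,…,m} and F_C = {m+1,…,d}. Let Q be a real (d − m) × d' matrix with orthonormal rows (Q Qᵀ = I) whose row space equals col(A) ∩ (span{A_{·,j} : j ∈ F_S})^⊥. Then: (1) Q A_{·,j} = 0 for every j ∈ F_S, and (2) the (d − m) × (d − m) matrix [Q A]_{·,F_C} formed by the columns of Q A indexed by F_C is invertible. -/

import Mathlib

open Matrix

/-- If `Q` has orthonormal rows and its row space equals
`col(A) ∩ span{A_{·,1},…,A_{·,m}}ᗮ`, then `Q` annihilates the style columns of `A`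
and `[Q A]_{·,F_C}` is invertible. -/
theorem stmt7 (d' d m : ℕ) (hm : m ≤ d)
    (A : Matrix (Fin d') (Fin d) ℝ)
    (hA : LinearIndependent ℝ (fun j : Fin d => fun i : Fin d' => A i j))
    (Q : Matrix (Fin (d - m)) (Fin d') ℝ)
    (hQ : Q * Qᵀ = 1)
    (hrow : ∀ x : Fin d' → ℝ,
      (∃ y : Fin (d - m) → ℝ, Qᵀ *ᵥ y = x) ↔
        ((∃ c : Fin d → ℝ, A *ᵥ c = x) ∧
          ∀ j : Fin m, x ⬝ᵥ (fun i : Fin d' => A i (Fin.castLE hm j)) = 0)) :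
    (∀ j : Fin m, (fun i : Fin (d - m) => (Q * A) i (Fin.castLE hm j)) = 0) ∧
    IsUnit (Matrix.of fun r c : Fin (d - m) =>
      (Q * A) r (Fin.cast (Nat.add_sub_cancel' hm) (Fin.natAdd m c))) := by
  classical
  have hmd : m + (d - m) = d := Nat.add_sub_cancel' hm
  -- injectivity of `A *ᵥ ·` from full column rank
  have hinj : ∀ c : Fin d → ℝ, A *ᵥ c = 0 → c = 0 := by
    intro c hc
    have h0 : ∑ j : Fin d, c j • (fun i : Fin d' => A i j) = 0 := by
      funext i
      have := congrFun hc i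
      simpa [mulVec, dotProduct, Finset.sum_apply, mul_comm] using this
    have := Fintype.linearIndependent_iff.mp hA c h0
    funext j; exact this j
  -- Part 1
  have part1 : ∀ j : Fin m, (fun i : Fin (d - m) => (Q * A) i (Fin.castLE hm j)) = 0 := by
    intro j
    funext r
    have hrrow : ∃ y, Qᵀ *ᵥ y = fun i => Q r i := by
      refine ⟨Pi.single r 1, ?_⟩
      funext i
      simp [mulVec, dotProduct, transpose_apply, Pi.single_apply]
    have h2 := ((hrow _).mp hrrow).2 j
    simpa [Matrix.mul_apply, dotProduct] using h2
  refine ⟨part1, ?_⟩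
  rw [Matrix.isUnit_iff_isUnit_det, isUnit_iff_ne_zero]
  intro hdet
  obtain ⟨v, hv, hMv⟩ := Matrix.exists_mulVec_eq_zero_iff.mpr hdet
  apply hv
  -- the candidate kernel coefficient vector on `Fin d`
  set c' : Fin d → ℝ := fun j => if h : m ≤ (j : ℕ) then v ⟨(j : ℕ) - m, by omega⟩ else 0
    with hc'
  set x : Fin d' → ℝ := A *ᵥ c' with hx
  -- splitting sums over `Fin d`
  have hsplit : ∀ f : Fin d → ℝ, ∑ j : Fin d, f j =
      (∑ j : Fin m, f (Fin.cast hmd (Fin.castAdd (d - m) j))) +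
      ∑ k : Fin (d - m), f (Fin.cast hmd (Fin.natAdd m k)) := by
    intro f
    rw [← Fin.sum_univ_add (f := fun j : Fin (m + (d - m)) => f (Fin.cast hmd j))]
    exact (Fintype.sum_equiv (finCongr hmd) _ _ (fun j => rfl)).symm
  have hc'lo : ∀ j : Fin m, c' (Fin.cast hmd (Fin.castAdd (d - m) j)) = 0 := by
    intro j
    have h1 : ¬ m ≤ ((Fin.cast hmd (Fin.castAdd (d - m) j) : Fin d) : ℕ) := by
      simp only [Fin.coe_cast, Fin.coe_castAdd]
      omega
    simp [hc', h1]
  have hc'hi : ∀ k : Fin (d - m), c' (Fin.cast hmd (Fin.natAdd m k)) = v k := by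
    intro k
    have h1 : m ≤ ((Fin.cast hmd (Fin.natAdd m k) : Fin d) : ℕ) := by
      simp [Fin.coe_cast, Fin.coe_natAdd]
    simp only [hc', dif_pos h1]
    congr 1
    ext
    simp [Fin.coe_cast, Fin.coe_natAdd]
  -- Q annihilates x
  have hQx : Q *ᵥ x = 0 := by
    rw [hx, Matrix.mulVec_mulVec]
    funext r
    have hr := congrFun hMv r
    simp only [mulVec, dotProduct, Matrix.of_apply, Pi.zero_apply] at hr
    simp only [mulVec, dotProduct, Pi.zero_apply]
    rw [hsplit (fun j => (Q * A) r j * c' j)]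
    rw [show (∑ j : Fin m, (Q * A) r (Fin.cast hmd (Fin.castAdd (d - m) j)) *
            c' (Fin.cast hmd (Fin.castAdd (d - m) j))) = 0 from
        Finset.sum_eq_zero fun j _ => by rw [hc'lo j, mul_zero], zero_add, ← hr]
    exact Finset.sum_congr rfl fun k _ => by rw [hc'hi k]
  -- the style-column span
  set g : Fin m → EuclideanSpace ℝ (Fin d') := fun j => WithLp.toLp 2 (fun i => A i (Fin.castLE hm j))
    with hg
  set S : Submodule ℝ (EuclideanSpace ℝ (Fin d')) := Submodule.span ℝ (Set.range g) with hS
  haveI : FiniteDimensional ℝ S := FiniteDimensional.span_of_finite ℝ (Set.finite_range g)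
  set p : Fin d' → ℝ := WithLp.ofLp (S.orthogonalProjectionOnto (WithLp.toLp 2 x) : EuclideanSpace ℝ (Fin d')) with hp
  set w : Fin d' → ℝ := x - p with hw
  have hpS : WithLp.toLp 2 p ∈ S := SetLike.coe_mem _
  have hwperp : WithLp.toLp 2 w ∈ Sᗮ := S.sub_starProjection_mem_orthogonal (WithLp.toLp 2 x)
  -- coefficients of p
  obtain ⟨a, ha⟩ := (Submodule.mem_span_range_iff_exists_fun ℝ).mp hpS
  set cp : Fin d → ℝ := fun j => if h : (j : ℕ) < m then a ⟨(j : ℕ), h⟩ else 0 with hcp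
  have hcplo : ∀ j : Fin m, cp (Fin.cast hmd (Fin.castAdd (d - m) j)) = a j := by
    intro j
    have h1 : ((Fin.cast hmd (Fin.castAdd (d - m) j) : Fin d) : ℕ) < m := by
      simpa [Fin.coe_cast, Fin.coe_castAdd] using j.isLt
    simp only [hcp, dif_pos h1]
    congr 1
  have hcphi : ∀ k : Fin (d - m), cp (Fin.cast hmd (Fin.natAdd m k)) = 0 := by
    intro k
    have h1 : ¬ ((Fin.cast hmd (Fin.natAdd m k) : Fin d) : ℕ) < m := by
      simp [Fin.coe_cast, Fin.coe_natAdd]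
    simp [hcp, h1]
  have hAcp : A *ᵥ cp = p := by
    funext i
    have hi : (∑ j, a j • g j) i = p i := congrFun (congrArg WithLp.ofLp ha) i
    simp only [mulVec, dotProduct]
    rw [hsplit (fun j => A i j * cp j)]
    rw [show (∑ k : Fin (d - m), A i (Fin.cast hmd (Fin.natAdd m k)) *
            cp (Fin.cast hmd (Fin.natAdd m k))) = 0 from
        Finset.sum_eq_zero fun k _ => by rw [hcphi k, mul_zero], add_zero, ← hi]
    rw [WithLp.ofLp_sum, Finset.sum_apply]
    refine Finset.sum_congr rfl fun j _ => ?_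
    rw [hcplo j]
    have hcast : Fin.cast hmd (Fin.castAdd (d - m) j) = Fin.castLE hm j := by
      ext; simp [Fin.coe_cast, Fin.coe_castAdd]
    rw [hcast]
    exact mul_comm _ _
  -- w is in the row space of Q
  have hwA : A *ᵥ (c' - cp) = w := by
    rw [Matrix.mulVec_sub, hAcp, hw, hx]
  have hwrow : ∃ y, Qᵀ *ᵥ y = w := by
    rw [hrow]
    refine ⟨⟨c' - cp, hwA⟩, ?_⟩
    intro j
    have hgS : g j ∈ S := Submodule.subset_span (Set.mem_range_self j)
    have h0 : inner (𝕜 := ℝ) (g j) (WithLp.toLp 2 w) = 0 :=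
      (Submodule.mem_orthogonal S _).mp hwperp (g j) hgS
    simp only [PiLp.inner_apply, RCLike.inner_apply, conj_trivial] at h0
    have h1 : (∑ i, w i * A i (Fin.castLE hm j)) = 0 := by
      rw [← h0]
    exact h1
  obtain ⟨y, hy⟩ := hwrow
  -- w ⬝ᵥ w = 0, hence w = 0
  have hwx : w ⬝ᵥ x = 0 := by
    rw [← hy, Matrix.mulVec_transpose, ← Matrix.dotProduct_mulVec, hQx, dotProduct_zero]
  have hwp : w ⬝ᵥ p = 0 := by
    have h0 := (Submodule.mem_orthogonal S _).mp hwperp _ hpS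
    simp only [PiLp.inner_apply, RCLike.inner_apply, conj_trivial] at h0
    have h1 : (∑ i, w i * p i) = 0 := by
      rw [← h0]
    exact h1
  have hww : w ⬝ᵥ w = 0 := by
    show w ⬝ᵥ (x - p) = 0
    rw [dotProduct_sub, hwx, hwp, sub_zero]
  have hw0 : w = 0 := dotProduct_self_eq_zero.mp hww
  have hccp : c' - cp = 0 := hinj _ (by rw [hwA, hw0])
  funext k
  have hk := congrFun hccp (Fin.cast hmd (Fin.natAdd m k))
  simp only [Pi.sub_apply, Pi.zero_apply, hc'hi k, hcphi k, sub_zero] at hk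
  exact hk
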